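/- With N(e₃) = e₁ on ℂ⁴ (symplectic basis e₁,…,e₄) and F₀ the flag F₀³ = span(u₂), F₀² = span(u₂, u₃), the pair (σ, exp(σ_ℂ)F₀) with σ = ℝ_{≥0}N is a nilpotent orbit: (i) N F₀² ⊂ F₀¹ and N F₀³ ⊂ F₀² (where F₀¹ = (F₀³)^⊥ with respect to the symplectic form), and (ii) exp(iyN)F₀ ∈ D for all sufficiently large y > 0. -/

import Mathlib

open Matrix Complex NormedSpace

noncomputable section

/-- The symplectic form on `ℂ⁴` with Gram matrix `((0, -I), (I, 0))` in the real symplectic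
basis `e₁,…,e₄` (the standard basis). -/
def Be (x y : Fin 4 → ℂ) : ℂ :=
  -(x 0 * y 2) - x 1 * y 3 + x 2 * y 0 + x 3 * y 1

/-- Componentwise conjugation (the `e_i` are real). -/
def cjE (x : Fin 4 → ℂ) : Fin 4 → ℂ := fun i => starRingEnd ℂ (x i)

/-- The period domain `D` of weight-3 polarized Hodge structures with all `h^{p,q} = 1`,
in `e`-coordinates (sign conventions from the Weil operator, as in Statement 7). -/
def DflagE : Set (Submodule ℂ (Fin 4 → ℂ) × Submodule ℂ (Fin 4 → ℂ)) :=
  {F | F.1 ≤ F.2 ∧ Module.finrank ℂ F.1 = 1 ∧ Module.finrank ℂ F.2 = 2 ∧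
    (∀ x ∈ F.2, ∀ y ∈ F.2, Be x y = 0) ∧
    (∀ v ∈ F.1, v ≠ 0 → 0 < (-Complex.I * Be v (cjE v)).re) ∧
    (∀ v ∈ F.2, (∀ w ∈ F.1, Be v (cjE w) = 0) → v ≠ 0 →
      0 < (Complex.I * Be v (cjE v)).re)}

/- ### Auxiliary material -/

lemma exp_of_sq_zero' (A : Matrix (Fin 4) (Fin 4) ℂ) (h : A * A = 0) :
    exp A = 1 + A := by
  have hpow : ∀ n, A ^ (n + 2) = 0 := fun n => by
    rw [pow_add, pow_two, h, mul_zero]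
  have key : ∑' n : ℕ, ((n.factorial : ℂ))⁻¹ • A ^ n
      = ∑ n ∈ Finset.range 2, ((n.factorial : ℂ))⁻¹ • A ^ n := by
    apply tsum_eq_sum
    intro n hn
    simp only [Finset.mem_range, not_lt] at hn
    obtain ⟨m, rfl⟩ : ∃ m, n = m + 2 := ⟨n - 2, by omega⟩
    rw [hpow, smul_zero]
  simp only [exp_eq_tsum (𝕂 := ℂ)]
  rw [key]
  simp [Finset.sum_range_succ, Nat.factorial]

/-- The explicit matrix of `N`. -/
def M0 : Matrix (Fin 4) (Fin 4) ℂ := !![0,0,1,0; 0,0,0,0; 0,0,0,0; 0,0,0,0]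

lemma M0_sq : M0 * M0 = 0 := by
  ext i j
  fin_cases i <;> fin_cases j <;>
    simp [M0, Matrix.mul_apply, Fin.sum_univ_four, Matrix.vecHead, Matrix.vecTail]

lemma M0_v2 : M0.mulVec ![0,1,0,Complex.I] = 0 := by
  funext i
  fin_cases i <;>
    simp [M0, Matrix.mulVec, dotProduct, Fin.sum_univ_four, Matrix.vecHead, Matrix.vecTail]

lemma M0_v3 : M0.mulVec ![1,0,-Complex.I,0] = ![-Complex.I,0,0,0] := by
  funext i
  fin_cases i <;>
    simp [M0, Matrix.mulVec, dotProduct, Fin.sum_univ_four, Matrix.vecHead, Matrix.vecTail]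

lemma N_eq_M0 (N : Matrix (Fin 4) (Fin 4) ℂ)
    (hN3 : N.mulVec (Pi.single 2 1) = Pi.single 0 1)
    (hNj : ∀ j : Fin 4, j ≠ 2 → N.mulVec (Pi.single j 1) = 0) : N = M0 := by
  ext i j
  rw [show N i j = (N *ᵥ Pi.single j 1) i from by rw [Matrix.mulVec_single_one]; rfl]
  by_cases hj : j = 2
  · subst hj; rw [hN3]
    fin_cases i <;> simp [M0, Pi.single_apply, Matrix.vecHead, Matrix.vecTail]
  · rw [hNj j hj]
    fin_cases i <;> fin_cases j <;> simp_all [M0, Matrix.vecHead, Matrix.vecTail]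

/-- The key membership in the period domain. -/
lemma key_mem_DflagE (y : ℝ) (hy : 1 ≤ y) :
    ((Submodule.span ℂ {![0,1,0,Complex.I]} : Submodule ℂ (Fin 4 → ℂ)),
     (Submodule.span ℂ {![0,1,0,Complex.I], ![1+(y:ℂ),0,-Complex.I,0]} :
        Submodule ℂ (Fin 4 → ℂ))) ∈ DflagE := by
  set v2 : Fin 4 → ℂ := ![0,1,0,Complex.I] with hv2
  set wy : Fin 4 → ℂ := ![1+(y:ℂ),0,-Complex.I,0] with hwy
  have hv2ne : v2 ≠ 0 := by
    intro h
    have := congrFun h 1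
    simp [hv2] at this
  have hwyne : wy ≠ 0 := by
    intro h
    have := congrFun h 2
    simp [hwy] at this
  refine ⟨?_, ?_, ?_, ?_, ?_, ?_⟩
  · exact Submodule.span_mono (by simp)
  · exact finrank_span_singleton hv2ne
  · have hli : LinearIndependent ℂ ![v2, wy] := by
      rw [LinearIndependent.pair_iff]
      intro s t hst
      have h1 := congrFun hst 1
      have h2 := congrFun hst 2
      simp [hv2, hwy] at h1 h2
      exact ⟨h1, by simpa [h1] using h2⟩
    have hr : Set.range ![v2, wy] = {v2, wy} := by
      ext x
      simp [Fin.exists_fin_two, or_comm]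
    rw [show ({v2, wy} : Set (Fin 4 → ℂ)) = Set.range ![v2, wy] from hr.symm,
      finrank_span_eq_card hli]
    simp
  · intro x hx z hz
    rw [Submodule.mem_span_pair] at hx hz
    obtain ⟨a, b, rfl⟩ := hx
    obtain ⟨a', b', rfl⟩ := hz
    simp only [Be, Pi.add_apply, Pi.smul_apply, smul_eq_mul, hv2, hwy,
      Matrix.cons_val_zero, Matrix.cons_val_one, Matrix.head_cons,
      Matrix.cons_val_two, Matrix.cons_val_three, Matrix.tail_cons]
    ring
  · intro v hv hvne
    rw [Submodule.mem_span_singleton] at hv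
    obtain ⟨a, rfl⟩ := hv
    have ha : a ≠ 0 := by rintro rfl; simp at hvne
    have hns := Complex.normSq_pos.mpr ha
    simp only [Be, cjE, Pi.smul_apply, smul_eq_mul, hv2,
      Matrix.cons_val_zero, Matrix.cons_val_one, Matrix.head_cons,
      Matrix.cons_val_two, Matrix.cons_val_three, Matrix.tail_cons,
      _root_.map_mul, _root_.map_zero, _root_.map_one, Complex.conj_I]
    simp only [Complex.mul_re, Complex.mul_im, Complex.neg_re, Complex.neg_im,
      Complex.I_re, Complex.I_im, Complex.conj_re, Complex.conj_im,
      Complex.add_re, Complex.add_im, Complex.sub_re, Complex.sub_im,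
      Complex.zero_re, Complex.zero_im, Complex.one_re, Complex.one_im]
    nlinarith [Complex.normSq_apply a, hns]
  · intro v hv horth hvne
    rw [Submodule.mem_span_pair] at hv
    obtain ⟨a, b, rfl⟩ := hv
    have hv2mem : v2 ∈ (Submodule.span ℂ {v2} : Submodule ℂ (Fin 4 → ℂ)) :=
      Submodule.mem_span_singleton_self _
    have h0 := horth v2 hv2mem
    have ha : a = 0 := by
      simp only [Be, cjE, Pi.add_apply, Pi.smul_apply, smul_eq_mul, hv2, hwy,
        Matrix.cons_val_zero, Matrix.cons_val_one, Matrix.head_cons,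
        Matrix.cons_val_two, Matrix.cons_val_three, Matrix.tail_cons,
        _root_.map_mul, _root_.map_zero, _root_.map_one, Complex.conj_I] at h0
      have : a * (2 * Complex.I) = 0 := by linear_combination h0
      rcases mul_eq_zero.mp this with h | h
      · exact h
      · exact absurd h (by simp [Complex.I_ne_zero])
    subst ha
    have hb : b ≠ 0 := by
      rintro rfl; simp at hvne
    have hns := Complex.normSq_pos.mpr hb
    simp only [Be, cjE, Pi.add_apply, Pi.smul_apply, smul_eq_mul, hv2, hwy,
      Matrix.cons_val_zero, Matrix.cons_val_one, Matrix.head_cons,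
      Matrix.cons_val_two, Matrix.cons_val_three, Matrix.tail_cons,
      _root_.map_mul, _root_.map_zero, _root_.map_one, _root_.map_add, Complex.conj_I, Complex.conj_ofReal]
    simp only [Complex.mul_re, Complex.mul_im, Complex.neg_re, Complex.neg_im,
      Complex.I_re, Complex.I_im, Complex.conj_re, Complex.conj_im,
      Complex.add_re, Complex.add_im, Complex.sub_re, Complex.sub_im,
      Complex.zero_re, Complex.zero_im, Complex.one_re, Complex.one_im,
      Complex.ofReal_re, Complex.ofReal_im]
    nlinarith [Complex.normSq_apply b, hns, hy]

/-- With `N(e₃) = e₁` and the flag `F₀³ = span(u₂) ⊂ F₀² = span(u₂, u₃)`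
(where `u₂ = (e₂ + i e₄)/√2`, `u₃ = (e₁ - i e₃)/√2`), extended by
`F₀¹ = (F₀³)^⊥` (symplectic annihilator), the pair `(σ, exp(σ_ℂ) F₀)` with `σ = ℝ_{≥0} N`
is a nilpotent orbit: (i) `N F₀³ ⊆ F₀²` and `N F₀² ⊆ F₀¹`, and
(ii) `exp(i y N) F₀ ∈ D` for all sufficiently large `y > 0`. -/
theorem sigma_expF0_is_nilpotent_orbit
    (N : Matrix (Fin 4) (Fin 4) ℂ)
    (hN3 : N.mulVec (Pi.single 2 1) = Pi.single 0 1)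
    (hNj : ∀ j : Fin 4, j ≠ 2 → N.mulVec (Pi.single j 1) = 0)
    (u2 u3 : Fin 4 → ℂ)
    (hu2 : u2 = (Real.sqrt 2 : ℂ)⁻¹ • ![0, 1, 0, Complex.I])
    (hu3 : u3 = (Real.sqrt 2 : ℂ)⁻¹ • ![1, 0, -Complex.I, 0])
    (F3 F2 F1 : Submodule ℂ (Fin 4 → ℂ))
    (hF3 : F3 = Submodule.span ℂ {u2})
    (hF2 : F2 = Submodule.span ℂ {u2, u3})
    (hF1 : ∀ v : Fin 4 → ℂ, v ∈ F1 ↔ ∀ w ∈ F3, Be v w = 0) :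
    (F3.map N.mulVecLin ≤ F2 ∧ F2.map N.mulVecLin ≤ F1) ∧
    (∃ y₀ : ℝ, 0 < y₀ ∧ ∀ y : ℝ, y₀ ≤ y →
      (F3.map (exp ((Complex.I * y) • N)).mulVecLin,
       F2.map (exp ((Complex.I * y) • N)).mulVecLin) ∈ DflagE) := by
  have hNM : N = M0 := N_eq_M0 N hN3 hNj
  set c : ℂ := (Real.sqrt 2 : ℂ)⁻¹ with hc
  have hcne : c ≠ 0 := by
    rw [hc]
    apply inv_ne_zero
    simp [Complex.ofReal_ne_zero, Real.sqrt_ne_zero']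
  have hcu : IsUnit c := isUnit_iff_ne_zero.mpr hcne
  set v2 : Fin 4 → ℂ := ![0,1,0,Complex.I] with hv2d
  set v3 : Fin 4 → ℂ := ![1,0,-Complex.I,0] with hv3d
  -- Images of the generators under N
  have hNu2 : N.mulVecLin u2 = 0 := by
    rw [hu2, _root_.map_smul, Matrix.mulVecLin_apply, hNM, M0_v2, smul_zero]
  have hNu3 : N.mulVecLin u3 = c • ![-Complex.I,0,0,0] := by
    rw [hu3, _root_.map_smul, Matrix.mulVecLin_apply, hNM, M0_v3]
  constructor
  · constructor
    · rw [hF3, Submodule.map_span_le]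
      rintro m rfl
      rw [hNu2]
      exact F2.zero_mem
    · rw [hF2, Submodule.map_span_le]
      intro m hm
      rcases hm with rfl | rfl
      · rw [hNu2]; exact F1.zero_mem
      · rw [hNu3, hF1]
        intro w hw
        rw [hF3, Submodule.mem_span_singleton] at hw
        obtain ⟨a, rfl⟩ := hw
        rw [hu2]
        simp only [Be, Pi.smul_apply, smul_eq_mul, hv2d,
          Matrix.cons_val_zero, Matrix.cons_val_one, Matrix.head_cons,
          Matrix.cons_val_two, Matrix.cons_val_three, Matrix.tail_cons]
        ring
  · refine ⟨1, one_pos, fun y hy => ?_⟩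
    set A : Matrix (Fin 4) (Fin 4) ℂ := (Complex.I * y) • N with hAd
    have hAsq : A * A = 0 := by
      rw [hAd, Matrix.smul_mul, Matrix.mul_smul, hNM, M0_sq, smul_zero, smul_zero]
    have hA : exp A = 1 + A := exp_of_sq_zero' A hAsq
    set wy : Fin 4 → ℂ := ![1+(y:ℂ),0,-Complex.I,0] with hwyd
    have hAu2 : (exp A).mulVecLin u2 = c • v2 := by
      rw [hA, hu2, _root_.map_smul]
      simp only [Matrix.mulVecLin_apply, Matrix.add_mulVec, Matrix.one_mulVec, hAd,
        Matrix.smul_mulVec, hNM, M0_v2, smul_zero, add_zero, hv2d]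
    have hAu3 : (exp A).mulVecLin u3 = c • wy := by
      rw [hA, hu3, _root_.map_smul]
      congr 1
      simp only [Matrix.mulVecLin_apply, Matrix.add_mulVec, Matrix.one_mulVec, hAd,
        Matrix.smul_mulVec, hNM, hv3d, M0_v3]
      funext i
      fin_cases i <;>
        simp [hwyd, Matrix.vecHead, Matrix.vecTail, Complex.ext_iff, Complex.mul_re,
          Complex.mul_im]
    have hmap3 : F3.map (exp A).mulVecLin = Submodule.span ℂ {v2} := by
      rw [hF3, Submodule.map_span, Set.image_singleton, hAu2,
        Submodule.span_singleton_smul_eq hcu]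
    have hmap2 : F2.map (exp A).mulVecLin = Submodule.span ℂ {v2, wy} := by
      rw [hF2, Submodule.map_span]
      rw [show (exp A).mulVecLin '' {u2, u3} = {c • v2, c • wy} by
        rw [Set.image_insert_eq, Set.image_singleton, hAu2, hAu3]]
      rw [Submodule.span_insert, Submodule.span_insert,
        Submodule.span_singleton_smul_eq hcu, Submodule.span_singleton_smul_eq hcu]
    rw [hmap3, hmap2]
    exact key_mem_DflagE y hy

end
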